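/- Let Γ and Δ be folded X-digraphs with base vertices u and v respectively, and let Γ × Δ be their product digraph. Then Γ × Δ is folded and L(Γ × Δ, (u,v)) = L(Γ, u) ∩ L(Δ, v) as subgroups of the free group F(X). -/

import Mathlib

/-- An `X`-digraph: a directed graph whose edges are labeled by elements of `X`. -/
structure XDigraph (X : Type) where
  V : Type
  E : Type
  o : E → V
  t : E → V
  lab : E → X

namespace XDigraph

variable {X : Type}

/-- `Γ` is folded: no vertex has two distinct outgoing edges with the same label, nor
two distinct incoming edges with the same label. -/
def Folded (Γ : XDigraph X) : Prop :=
  (∀ e f : Γ.E, Γ.o e = Γ.o f → Γ.lab e = Γ.lab f → e = f) ∧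
  (∀ e f : Γ.E, Γ.t e = Γ.t f → Γ.lab e = Γ.lab f → e = f)

/-- A directed edge of `Γ̂`: an edge of `Γ` together with a direction of traversal
(`true` = forwards, `false` = backwards). -/
abbrev DEdge (Γ : XDigraph X) : Type := Γ.E × Bool

/-- Origin of a directed edge. -/
def dO (Γ : XDigraph X) (d : DEdge Γ) : Γ.V := if d.2 then Γ.o d.1 else Γ.t d.1

/-- Terminus of a directed edge. -/
def dT (Γ : XDigraph X) (d : DEdge Γ) : Γ.V := if d.2 then Γ.t d.1 else Γ.o d.1

/-- `IsPath Γ u v p`: the list `p` of directed edges is a path from `u` to `v`. -/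
def IsPath (Γ : XDigraph X) : Γ.V → Γ.V → List (DEdge Γ) → Prop
  | u, v, [] => u = v
  | u, v, d :: p => Γ.dO d = u ∧ IsPath Γ (Γ.dT d) v p

/-- A path is reduced if it never immediately backtracks along the same edge. -/
def Reduced (Γ : XDigraph X) (p : List (DEdge Γ)) : Prop :=
  List.Chain' (fun d₁ d₂ => d₂ ≠ (d₁.1, !d₁.2)) p

/-- The label of a path, as an element of the free group `F(X)`: a reversed edge
contributes the inverse of its label. -/
def plabel (Γ : XDigraph X) (p : List (DEdge Γ)) : FreeGroup X :=
  FreeGroup.mk (p.map fun d => (Γ.lab d.1, d.2))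

/-- The language `L(Γ, v)`: labels of reduced closed paths at `v`. -/
def LSet (Γ : XDigraph X) (v : Γ.V) : Set (FreeGroup X) :=
  {g | ∃ p : List (DEdge Γ), Γ.IsPath v v p ∧ Γ.Reduced p ∧ g = Γ.plabel p}

/-- `Γ` is a core graph with respect to `v`: every vertex and every edge of `Γ` lies
on some reduced closed path at `v`. -/
def IsCore (Γ : XDigraph X) (v : Γ.V) : Prop :=
  (∀ u : Γ.V, u = v ∨ ∃ p : List (DEdge Γ), Γ.IsPath v v p ∧ Γ.Reduced p ∧
      ∃ d ∈ p, Γ.dO d = u ∨ Γ.dT d = u) ∧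
  (∀ e : Γ.E, ∃ p : List (DEdge Γ), Γ.IsPath v v p ∧ Γ.Reduced p ∧ ∃ b : Bool, (e, b) ∈ p)

/-- The product of two `X`-digraphs: vertices are pairs of vertices, edges are pairs of
equally-labeled edges. -/
def prod (Γ Δ : XDigraph X) : XDigraph X where
  V := Γ.V × Δ.V
  E := {ef : Γ.E × Δ.E // Γ.lab ef.1 = Δ.lab ef.2}
  o := fun ef => (Γ.o ef.1.1, Δ.o ef.1.2)
  t := fun ef => (Γ.t ef.1.1, Δ.t ef.1.2)
  lab := fun ef => Γ.lab ef.1.1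

/-- The edges of `Core(Γ, v)`: edges lying on some reduced closed path at `v`. -/
def CoreEdges (Γ : XDigraph X) (v : Γ.V) : Set Γ.E :=
  {e | ∃ p : List (DEdge Γ), Γ.IsPath v v p ∧ Γ.Reduced p ∧ ∃ b : Bool, (e, b) ∈ p}

/-- The edges of `Type(Γ) = ⋂_{u ∈ VΓ} Core(Γ, u)`. -/
def TypeEdges (Γ : XDigraph X) : Set Γ.E := ⋂ u : Γ.V, Γ.CoreEdges u

/-- The language of the subgraph of `Γ` spanned by the edge set `S`, at the vertex `v`:
labels of reduced closed paths at `v` using only edges of `S`. -/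
def LSetIn (Γ : XDigraph X) (S : Set Γ.E) (v : Γ.V) : Set (FreeGroup X) :=
  {g | ∃ p : List (DEdge Γ), Γ.IsPath v v p ∧ Γ.Reduced p ∧
    (∀ d ∈ p, d.1 ∈ S) ∧ g = Γ.plabel p}

end XDigraph
namespace XDigraph

variable {X : Type}

lemma my_reduce_eq_self {α : Type} [DecidableEq α] :
    ∀ (w : List (α × Bool)), List.Chain' (fun a b => b ≠ (a.1, !a.2)) w →
      FreeGroup.reduce w = w := by
  intro w
  induction w with
  | nil => intro _; rfl
  | cons a w ih =>
    intro h
    rw [FreeGroup.reduce.cons, ih (List.IsChain.tail h)]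
    cases w with
    | nil => rfl
    | cons b t =>
      have hb : b ≠ (a.1, !a.2) := (List.isChain_cons_cons.mp h).1
      simp only []
      rw [if_neg]
      rintro ⟨h1, h2⟩
      exact hb (Prod.ext h1.symm (by simp [h2]))

/-- In a folded graph, the label word of a reduced path is a reduced word. -/
lemma my_reduced_word (Γ : XDigraph X) (hΓ : Γ.Folded) :
    ∀ (p : List (DEdge Γ)) (a b : Γ.V), Γ.IsPath a b p → Γ.Reduced p →
      List.Chain' (fun x y => y ≠ (x.1, !x.2)) (p.map fun d => (Γ.lab d.1, d.2)) := by
  intro p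
  induction p with
  | nil => intro a b _ _; simp [List.Chain']
  | cons d₁ p ih =>
    intro a b hpath hred
    obtain ⟨h1, h2⟩ := hpath
    cases p with
    | nil => simp [List.Chain']
    | cons d₂ r =>
      obtain ⟨h3, h4⟩ := h2
      refine List.isChain_cons_cons.mpr ⟨?_, ih _ _ ⟨h3, h4⟩ (List.IsChain.tail hred)⟩
      intro heq
      have hlab : Γ.lab d₂.1 = Γ.lab d₁.1 := congrArg Prod.fst heq
      have hb : d₂.2 = !d₁.2 := congrArg Prod.snd heq
      have hne := (List.isChain_cons_cons.mp hred).1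
      apply hne
      cases hd : d₁.2 with
      | true =>
        have hb' : d₂.2 = false := by rw [hb, hd]; rfl
        have hT : Γ.t d₁.1 = Γ.t d₂.1 := by
          have := h3
          simp [dT, dO, hd, hb'] at this
          exact this.symm
        have := hΓ.2 d₂.1 d₁.1 hT.symm hlab
        exact Prod.ext this (by rw [hb, hd])
      | false =>
        have hb' : d₂.2 = true := by rw [hb, hd]; rfl
        have hO : Γ.o d₁.1 = Γ.o d₂.1 := by
          have := h3
          simp [dT, dO, hd, hb'] at this
          exact this.symm
        have := hΓ.1 d₂.1 d₁.1 hO.symm hlab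
        exact Prod.ext this (by rw [hb, hd])

/-- Build a path in the product with prescribed projections. -/
lemma my_build_prod (Γ Δ : XDigraph X) :
    ∀ (p : List (DEdge Γ)) (q : List (DEdge Δ)) (a a' : Γ.V) (b b' : Δ.V),
      Γ.IsPath a a' p → Δ.IsPath b b' q →
      (p.map fun d => (Γ.lab d.1, d.2)) = (q.map fun d => (Δ.lab d.1, d.2)) →
      ∃ r : List (DEdge (Γ.prod Δ)),
        (Γ.prod Δ).IsPath (a, b) (a', b') r ∧
        r.map (fun d => ((d.1.1.1 : Γ.E), d.2)) = p ∧
        r.map (fun d => ((d.1.1.2 : Δ.E), d.2)) = q := by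
  intro p
  induction p with
  | nil =>
    intro q a a' b b' hp hq hw
    cases q with
    | nil =>
      refine ⟨[], ?_, rfl, rfl⟩
      have hp' : a = a' := hp
      have hq' : b = b' := hq
      show ((a : Γ.V), b) = (a', b')
      rw [hp', hq']
    | cons e q => simp at hw
  | cons d p ih =>
    intro q a a' b b' hp hq hw
    cases q with
    | nil => simp at hw
    | cons e q =>
      simp only [List.map_cons, List.cons.injEq] at hw
      obtain ⟨hhd, htl⟩ := hw
      have hlab : Γ.lab d.1 = Δ.lab e.1 := congrArg Prod.fst hhd
      have hbb : d.2 = e.2 := congrArg Prod.snd hhd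
      obtain ⟨hp1, hp2⟩ := hp
      obtain ⟨hq1, hq2⟩ := hq
      obtain ⟨r, hr, hr1, hr2⟩ := ih q (Γ.dT d) a' (Δ.dT e) b' hp2 hq2 htl
      refine ⟨(⟨(d.1, e.1), hlab⟩, d.2) :: r, ⟨?_, ?_⟩, ?_, ?_⟩
      · have : (Γ.prod Δ).dO (⟨(d.1, e.1), hlab⟩, d.2) = (Γ.dO d, Δ.dO e) := by
          cases hd : d.2 with
          | true =>
            have he : e.2 = true := hbb ▸ hd
            simp [dO, prod, hd, he]
          | false =>
            have he : e.2 = false := hbb ▸ hd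
            simp [dO, prod, hd, he]
        rw [this, hp1, hq1]
      · have : (Γ.prod Δ).dT (⟨(d.1, e.1), hlab⟩, d.2) = (Γ.dT d, Δ.dT e) := by
          cases hd : d.2 with
          | true =>
            have he : e.2 = true := hbb ▸ hd
            simp [dT, prod, hd, he]
          | false =>
            have he : e.2 = false := hbb ▸ hd
            simp [dT, prod, hd, he]
        rw [this]; exact hr
      · simp [hr1]
      · simp [hr2]
        show ((e.1 : Δ.E), d.2) = e
        rw [hbb]

/-- Projections of a product path are paths. -/
lemma my_proj_path (Γ Δ : XDigraph X) :
    ∀ (r : List (DEdge (Γ.prod Δ))) (w w' : (Γ.prod Δ).V),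
      (Γ.prod Δ).IsPath w w' r →
      Γ.IsPath w.1 w'.1 (r.map fun d => (d.1.1.1, d.2)) ∧
      Δ.IsPath w.2 w'.2 (r.map fun d => (d.1.1.2, d.2)) := by
  intro r
  induction r with
  | nil => intro w w' h; simp [IsPath] at h ⊢; exact ⟨congrArg Prod.fst h, congrArg Prod.snd h⟩
  | cons d r ih =>
    intro w w' h
    obtain ⟨h1, h2⟩ := h
    have hT : (Γ.prod Δ).dT d = (Γ.dT (d.1.1.1, d.2), Δ.dT (d.1.1.2, d.2)) := by
      cases hd : d.2 with
      | true => simp [dT, prod, hd]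
      | false => simp [dT, prod, hd]
    have hO : (Γ.prod Δ).dO d = (Γ.dO (d.1.1.1, d.2), Δ.dO (d.1.1.2, d.2)) := by
      cases hd : d.2 with
      | true => simp [dO, prod, hd]
      | false => simp [dO, prod, hd]
    rw [hT] at h2
    obtain ⟨ihΓ, ihΔ⟩ := ih _ _ h2
    rw [hO] at h1
    exact ⟨⟨congrArg Prod.fst h1, ihΓ⟩, ⟨congrArg Prod.snd h1, ihΔ⟩⟩

/-- Projections of a reduced product path are reduced, using foldedness of the other factor. -/
lemma my_proj_reduced (Γ Δ : XDigraph X) (hΓ : Γ.Folded) (hΔ : Δ.Folded) :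
    ∀ (r : List (DEdge (Γ.prod Δ))) (w w' : (Γ.prod Δ).V),
      (Γ.prod Δ).IsPath w w' r → (Γ.prod Δ).Reduced r →
      Γ.Reduced (r.map fun d => (d.1.1.1, d.2)) ∧
      Δ.Reduced (r.map fun d => (d.1.1.2, d.2)) := by
  intro r
  induction r with
  | nil => intro _ _ _ _; exact ⟨List.isChain_nil, List.isChain_nil⟩
  | cons d₁ r ih =>
    intro w w' h hred
    obtain ⟨h1, h2⟩ := h
    cases r with
    | nil => exact ⟨by simp [Reduced, List.Chain'], by simp [Reduced, List.Chain']⟩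
    | cons d₂ r =>
      obtain ⟨h3, h4⟩ := h2
      obtain ⟨ihΓ, ihΔ⟩ := ih _ _ ⟨h3, h4⟩ (List.IsChain.tail hred)
      have hne := (List.isChain_cons_cons.mp hred).1
      constructor
      · refine List.isChain_cons_cons.mpr ⟨?_, ihΓ⟩
        intro heq
        replace heq : ((d₂.1.1.1 : Γ.E), d₂.2) = ((d₁.1.1.1 : Γ.E), !d₁.2) := heq
        injection heq with he hb
        -- derive d₂.1.1.2 = d₁.1.1.2 from foldedness of Δ
        have hlabΔ : Δ.lab d₂.1.1.2 = Δ.lab d₁.1.1.2 := by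
          rw [← d₂.1.2, ← d₁.1.2, he]
        have hfΔ : d₂.1.1.2 = d₁.1.1.2 := by
          cases hd : d₁.2 with
          | true =>
            have hb' : d₂.2 = false := by rw [hb, hd]; rfl
            have hT : Δ.t d₂.1.1.2 = Δ.t d₁.1.1.2 := by
              have := congrArg Prod.snd h3
              simp [dT, dO, prod, hd, hb'] at this
              exact this
            exact hΔ.2 _ _ hT hlabΔ
          | false =>
            have hb' : d₂.2 = true := by rw [hb, hd]; rfl
            have hO : Δ.o d₂.1.1.2 = Δ.o d₁.1.1.2 := by
              have := congrArg Prod.snd h3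
              simp [dT, dO, prod, hd, hb'] at this
              exact this
            exact hΔ.1 _ _ hO hlabΔ
        exact hne (Prod.ext (Subtype.ext (Prod.ext he hfΔ)) hb)
      · refine List.isChain_cons_cons.mpr ⟨?_, ihΔ⟩
        intro heq
        replace heq : ((d₂.1.1.2 : Δ.E), d₂.2) = ((d₁.1.1.2 : Δ.E), !d₁.2) := heq
        injection heq with hf hb
        have hlabΓ : Γ.lab d₂.1.1.1 = Γ.lab d₁.1.1.1 := by
          rw [d₂.1.2, d₁.1.2, hf]
        have hfΓ : d₂.1.1.1 = d₁.1.1.1 := by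
          cases hd : d₁.2 with
          | true =>
            have hb' : d₂.2 = false := by rw [hb, hd]; rfl
            have hT : Γ.t d₂.1.1.1 = Γ.t d₁.1.1.1 := by
              have := congrArg Prod.fst h3
              simp [dT, dO, prod, hd, hb'] at this
              exact this
            exact hΓ.2 _ _ hT hlabΓ
          | false =>
            have hb' : d₂.2 = true := by rw [hb, hd]; rfl
            have hO : Γ.o d₂.1.1.1 = Γ.o d₁.1.1.1 := by
              have := congrArg Prod.fst h3
              simp [dT, dO, prod, hd, hb'] at this
              exact this
            exact hΓ.1 _ _ hO hlabΓ
        exact hne (Prod.ext (Subtype.ext (Prod.ext hfΓ hf)) hb)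

end XDigraph

/-- If `Γ` and `Δ` are folded `X`-digraphs with base vertices `u`, `v`,
then the product `Γ × Δ` is folded and `L(Γ × Δ, (u,v)) = L(Γ, u) ∩ L(Δ, v)`. -/
theorem product_language {X : Type} (Γ Δ : XDigraph X) (u : Γ.V) (v : Δ.V)
    (hΓ : Γ.Folded) (hΔ : Δ.Folded) :
    (Γ.prod Δ).Folded ∧ (Γ.prod Δ).LSet (u, v) = Γ.LSet u ∩ Δ.LSet v := by
  classical
  open XDigraph in
  refine ⟨⟨?_, ?_⟩, ?_⟩
  · intro e f ho hl
    apply Subtype.ext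
    have h1 : Γ.o e.1.1 = Γ.o f.1.1 := congrArg Prod.fst ho
    have h2 : Δ.o e.1.2 = Δ.o f.1.2 := congrArg Prod.snd ho
    have hl2 : Δ.lab e.1.2 = Δ.lab f.1.2 := by rw [← e.2, ← f.2]; exact hl
    exact Prod.ext (hΓ.1 _ _ h1 hl) (hΔ.1 _ _ h2 hl2)
  · intro e f ho hl
    apply Subtype.ext
    have h1 : Γ.t e.1.1 = Γ.t f.1.1 := congrArg Prod.fst ho
    have h2 : Δ.t e.1.2 = Δ.t f.1.2 := congrArg Prod.snd ho
    have hl2 : Δ.lab e.1.2 = Δ.lab f.1.2 := by rw [← e.2, ← f.2]; exact hl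
    exact Prod.ext (hΓ.2 _ _ h1 hl) (hΔ.2 _ _ h2 hl2)
  ext g
  constructor
  · rintro ⟨r, hr, hred, rfl⟩
    obtain ⟨hpΓ, hpΔ⟩ := XDigraph.my_proj_path Γ Δ r (u, v) (u, v) hr
    obtain ⟨hrΓ, hrΔ⟩ := XDigraph.my_proj_reduced Γ Δ hΓ hΔ r (u, v) (u, v) hr hred
    refine ⟨⟨_, hpΓ, hrΓ, ?_⟩, ⟨_, hpΔ, hrΔ, ?_⟩⟩
    · unfold XDigraph.plabel
      rw [List.map_map]
      rfl
    · unfold XDigraph.plabel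
      rw [List.map_map]
      congr 1
      apply List.map_congr_left
      intro d _
      show ((Γ.lab d.1.1.1 : X), d.2) = (Δ.lab d.1.1.2, d.2)
      rw [d.1.2]
  · rintro ⟨⟨p, hp, hpred, hg1⟩, ⟨q, hq, hqred, hg2⟩⟩
    have hw : (p.map fun d => (Γ.lab d.1, d.2)) = (q.map fun d => (Δ.lab d.1, d.2)) := by
      have h1 := XDigraph.my_reduced_word Γ hΓ p u u hp hpred
      have h2 := XDigraph.my_reduced_word Δ hΔ q v v hq hqred
      have heq : Γ.plabel p = Δ.plabel q := hg1.symm.trans hg2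
      have := congrArg FreeGroup.toWord heq
      rwa [XDigraph.plabel, XDigraph.plabel, FreeGroup.toWord_mk, FreeGroup.toWord_mk,
        XDigraph.my_reduce_eq_self _ h1, XDigraph.my_reduce_eq_self _ h2] at this
    obtain ⟨r, hr, hr1, hr2⟩ := XDigraph.my_build_prod Γ Δ p q u u v v hp hq hw
    refine ⟨r, hr, ?_, ?_⟩
    · rw [← hr1] at hpred
      rw [XDigraph.Reduced, List.Chain', List.isChain_map] at hpred
      exact List.IsChain.imp (fun a b h heq => h (by rw [heq])) hpred
    · rw [hg1, ← hr1]
      unfold XDigraph.plabel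
      rw [List.map_map]
      rfl
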